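/- Suppose A is a strictly upper triangular integer matrix such that P_A is a set of compositions, with A[i,i+1] = 1 and A[i,j] = 0 for j > i+1 whenever i ≥ 2, and first row given by A[1,j+1] = a_j for 1 ≤ j ≤ k-1. Then the generating function of P_A (sequences with λ_i ≥ λ_{i+1} for 2 ≤ i ≤ k-1, λ_k ≥ 0, and λ_1 ≥ Σ_{i=1}^{k-1} a_i λ_{i+1}) is (1-q)^{-1}·Π_{i=1}^{k-1} (1 - q^{i + a_1 + ... + a_i})^{-1}, provided a_1 + ... + a_i ≥ -(i-1)... i.e. i + a_1 + ... + a_i ≥ 1 for all i. -/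

import Mathlib

open Finset

private def Hs (k : ℕ) (s : Fin k → ℕ) (m : ℕ) : ℕ :=
  ∑ j ∈ univ.filter (fun j : Fin k => m ≤ (j : ℕ)), s j

private lemma Hs_rec (k : ℕ) (s : Fin k → ℕ) (m : ℕ) (hm : m < k) :
    Hs k s m = s ⟨m, hm⟩ + Hs k s (m + 1) := by
  have h : univ.filter (fun j : Fin k => m ≤ (j : ℕ))
      = insert ⟨m, hm⟩ (univ.filter (fun j : Fin k => m + 1 ≤ (j : ℕ))) := by
    ext j
    simp only [mem_filter, mem_univ, true_and, mem_insert, Fin.ext_iff]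
    omega
  rw [Hs, h, Finset.sum_insert (by simp only [mem_filter, mem_univ, true_and]; omega)]
  rfl

private lemma Hs_of_le (k : ℕ) (s : Fin k → ℕ) (m : ℕ) (h : k ≤ m) : Hs k s m = 0 := by
  rw [Hs, Finset.filter_false_of_mem, Finset.sum_empty]
  intro j _
  omega

private lemma swap_sum (k : ℕ) (s : Fin k → ℕ) (c : ℕ → ℤ) :
    ∑ i ∈ univ.filter (fun i : Fin k => 0 < (i : ℕ)), c i * (Hs k s i : ℤ)
      = ∑ j ∈ univ.filter (fun j : Fin k => 0 < (j : ℕ)),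
          (∑ m ∈ Finset.Icc 1 (j : ℕ), c m) * (s j : ℤ) := by
  have L : ∀ i : Fin k, c (i : ℕ) * (Hs k s i : ℤ)
      = ∑ j : Fin k, if (i : ℕ) ≤ (j : ℕ) then c (i : ℕ) * (s j : ℤ) else 0 := by
    intro i
    rw [Hs, Nat.cast_sum, Finset.mul_sum, Finset.sum_filter]
  simp only [L]
  rw [Finset.sum_comm]
  rw [← Finset.sum_subset (Finset.filter_subset (fun j : Fin k => 0 < (j : ℕ)) univ)
    (fun j _ hj => by
      apply Finset.sum_eq_zero
      intro i hi
      simp only [mem_filter, mem_univ, true_and] at hi hj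
      rw [if_neg]
      omega)]
  apply Finset.sum_congr rfl
  intro j hj
  rw [← Finset.sum_filter, Finset.filter_filter, ← Finset.sum_mul]
  congr 1
  apply Finset.sum_nbij' (i := fun (x : Fin k) => (x : ℕ))
    (j := fun (m : ℕ) => (⟨m % k, Nat.mod_lt m j.pos⟩ : Fin k))
  · intro x hx
    simp only [mem_filter, mem_univ, true_and] at hx
    simp only [Finset.mem_Icc]
    omega
  · intro m hm
    simp only [Finset.mem_Icc] at hm
    have hml : m < k := by omega
    simp only [mem_filter, mem_univ, true_and, Nat.mod_eq_of_lt hml]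
    omega
  · intro x hx
    simp only [mem_filter, mem_univ, true_and] at hx
    exact Fin.ext (by simp [Nat.mod_eq_of_lt x.isLt])
  · intro m hm
    simp only [Finset.mem_Icc] at hm
    simp [Nat.mod_eq_of_lt (show m < k by omega)]
  · intro x _
    rfl

/-- with `λᵢ ≥ λ_{i+1}` for `2 ≤ i ≤ k-1`, `λ_k ≥ 0` and
`λ₁ ≥ ∑ aᵢ λ_{i+1}`, provided `i + a₁ + ⋯ + aᵢ ≥ 1` for all `1 ≤ i ≤ k-1`, the generating
function is `(1-q)⁻¹ ∏_{i=1}^{k-1} (1 - q^{i + a₁ + ⋯ + aᵢ})⁻¹`. -/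
theorem stmt_13 (k n : ℕ) (hk : 0 < k) (a : ℕ → ℤ)
    (ha : ∀ i, 1 ≤ i → i ≤ k - 1 → 1 ≤ (i : ℤ) + ∑ j ∈ Finset.Icc 1 i, a j) :
    {lam : Fin k → ℤ |
      0 ≤ lam ⟨k - 1, by omega⟩ ∧
      (∀ i : Fin k, 1 ≤ (i : ℕ) → ∀ h : (i : ℕ) + 1 < k, lam ⟨(i : ℕ) + 1, h⟩ ≤ lam i) ∧
      (∑ i ∈ Finset.univ.filter (fun i : Fin k => 0 < (i : ℕ)), a (i : ℕ) * lam i)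
        ≤ lam ⟨0, hk⟩ ∧
      ∑ i, lam i = (n : ℤ)}.ncard =
    {s : Fin k → ℕ |
      (s ⟨0, hk⟩ : ℤ) +
        ∑ i ∈ Finset.univ.filter (fun i : Fin k => 0 < (i : ℕ)),
          (((i : ℕ) : ℤ) + ∑ j ∈ Finset.Icc 1 (i : ℕ), a j) * (s i : ℤ) = (n : ℤ)}.ncard := by
  classical
  set F : Finset (Fin k) := Finset.univ.filter (fun i : Fin k => 0 < (i : ℕ)) with hF
  set g : (Fin k → ℕ) → Fin k → ℤ := fun s i =>
    if (i : ℕ) = 0 then (n : ℤ) - ∑ j ∈ F, (Hs k s (j : ℕ) : ℤ) else (Hs k s (i : ℕ) : ℤ)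
    with hg
  set T : Set (Fin k → ℕ) := {s : Fin k → ℕ |
      (s ⟨0, hk⟩ : ℤ) +
        ∑ i ∈ F, (((i : ℕ) : ℤ) + ∑ j ∈ Finset.Icc 1 (i : ℕ), a j) * (s i : ℤ) = (n : ℤ)}
    with hT
  set S : Set (Fin k → ℤ) := {lam : Fin k → ℤ |
      0 ≤ lam ⟨k - 1, by omega⟩ ∧
      (∀ i : Fin k, 1 ≤ (i : ℕ) → ∀ h : (i : ℕ) + 1 < k, lam ⟨(i : ℕ) + 1, h⟩ ≤ lam i) ∧
      (∑ i ∈ F, a (i : ℕ) * lam i) ≤ lam ⟨0, hk⟩ ∧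
      ∑ i, lam i = (n : ℤ)} with hS
  -- splitting a sum over Fin k at 0
  have split : ∀ f : Fin k → ℤ, ∑ i, f i = f ⟨0, hk⟩ + ∑ i ∈ F, f i := by
    intro f
    have h1 : Finset.univ.filter (fun i : Fin k => ¬ 0 < (i : ℕ)) = {⟨0, hk⟩} := by
      ext i
      simp only [mem_filter, mem_univ, true_and, Finset.mem_singleton, Fin.ext_iff]
      omega
    have := Finset.sum_filter_add_sum_filter_not Finset.univ (fun i : Fin k => 0 < (i : ℕ)) f
    rw [h1, Finset.sum_singleton] at this
    rw [← this, hF]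
    ring
  -- the two specializations of swap_sum
  have sw1 : ∀ s : Fin k → ℕ,
      ∑ j ∈ F, (Hs k s (j : ℕ) : ℤ) = ∑ j ∈ F, ((j : ℕ) : ℤ) * (s j : ℤ) := by
    intro s
    have := swap_sum k s (fun _ => 1)
    simpa using this
  have sw2 : ∀ s : Fin k → ℕ,
      ∑ i ∈ F, a (i : ℕ) * (Hs k s (i : ℕ) : ℤ)
        = ∑ j ∈ F, (∑ m ∈ Finset.Icc 1 (j : ℕ), a m) * (s j : ℤ) :=
    fun s => swap_sum k s a
  -- membership equation rearranged
  have Teq : ∀ s ∈ T, (s ⟨0, hk⟩ : ℤ)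
      + ∑ j ∈ F, ((j : ℕ) : ℤ) * (s j : ℤ)
      + ∑ j ∈ F, (∑ m ∈ Finset.Icc 1 (j : ℕ), a m) * (s j : ℤ) = (n : ℤ) := by
    intro s hs
    have := hs
    simp only [hT, Set.mem_setOf_eq] at this
    rw [← this, add_assoc, ← Finset.sum_add_distrib]
    congr 1
    apply Finset.sum_congr rfl
    intro j _
    ring
  -- key value of g at 0
  have key0 : ∀ s ∈ T, g s ⟨0, hk⟩
      = (s ⟨0, hk⟩ : ℤ) + ∑ j ∈ F, (∑ m ∈ Finset.Icc 1 (j : ℕ), a m) * (s j : ℤ) := by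
    intro s hs
    have h := Teq s hs
    simp only [hg, if_pos rfl]
    rw [sw1 s]
    linarith [h]
  -- g maps T into S
  have hmapsto : ∀ s ∈ T, g s ∈ S := by
    intro s hs
    have h0 := key0 s hs
    have hs0 : (0:ℤ) ≤ (s ⟨0, hk⟩ : ℤ) := Int.natCast_nonneg _
    simp only [hS, Set.mem_setOf_eq]
    refine ⟨?_, ?_, ?_, ?_⟩
    · by_cases hk1 : k = 1
      · have hix : (⟨k - 1, by omega⟩ : Fin k) = ⟨0, hk⟩ := by
          refine Fin.ext ?_
          show k - 1 = 0
          omega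
        rw [hix, h0]
        have hFe : F = ∅ := by
          ext j
          have := j.isLt
          simp only [hF, mem_filter, mem_univ, true_and, Finset.notMem_empty, iff_false]
          omega
        rw [hFe]
        simpa using hs0
      · have hne : ¬ ((⟨k - 1, by omega⟩ : Fin k) : ℕ) = 0 := by
          show ¬ k - 1 = 0
          omega
        simp only [hg, if_neg hne]
        positivity
    · intro i h1i h
      have hne1 : ¬ (i : ℕ) = 0 := by omega
      have hne2 : ¬ ((⟨(i : ℕ) + 1, h⟩ : Fin k) : ℕ) = 0 := by
        show ¬ (i : ℕ) + 1 = 0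
        omega
      simp only [hg, if_neg hne1, if_neg hne2]
      have hle : Hs k s ((i : ℕ) + 1) ≤ Hs k s (i : ℕ) := by
        rw [Hs_rec k s (i : ℕ) i.isLt]
        omega
      exact_mod_cast hle
    · have hcong : ∑ i ∈ F, a (i : ℕ) * g s i
          = ∑ i ∈ F, a (i : ℕ) * (Hs k s (i : ℕ) : ℤ) := by
        apply Finset.sum_congr rfl
        intro i hi
        simp only [hF, mem_filter, mem_univ, true_and] at hi
        simp only [hg, if_neg (by omega : ¬ (i : ℕ) = 0)]
      rw [hcong, sw2 s, h0]
      linarith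
    · rw [split (g s)]
      have hcong : ∑ i ∈ F, g s i = ∑ j ∈ F, (Hs k s (j : ℕ) : ℤ) := by
        apply Finset.sum_congr rfl
        intro i hi
        simp only [hF, mem_filter, mem_univ, true_and] at hi
        simp only [hg, if_neg (by omega : ¬ (i : ℕ) = 0)]
      rw [hcong]
      simp only [hg, if_pos rfl]
      ring
  -- injectivity on T
  have hinj : Set.InjOn g T := by
    intro s hs s' hs' hgs
    have HH : ∀ m, 1 ≤ m → Hs k s m = Hs k s' m := by
      intro m hm
      by_cases hmk : m < k
      · have h := congrFun hgs ⟨m, hmk⟩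
        simp only [hg, if_neg (show ¬ ((⟨m, hmk⟩ : Fin k) : ℕ) = 0 from by
          show ¬ m = 0; omega)] at h
        exact_mod_cast h
      · rw [Hs_of_le k s m (by omega), Hs_of_le k s' m (by omega)]
    have seq : ∀ i : Fin k, 1 ≤ (i : ℕ) → s i = s' i := by
      intro i hi
      have e1 := Hs_rec k s (i : ℕ) i.isLt
      have e2 := Hs_rec k s' (i : ℕ) i.isLt
      simp only [Fin.eta] at e1 e2
      have h1 := HH (i : ℕ) hi
      have h2 := HH ((i : ℕ) + 1) (by omega)
      omega
    have h0 := hs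
    have h0' := hs'
    simp only [hT, Set.mem_setOf_eq] at h0 h0'
    have hsum : ∑ i ∈ F, (((i : ℕ) : ℤ) + ∑ j ∈ Finset.Icc 1 (i : ℕ), a j) * (s i : ℤ)
        = ∑ i ∈ F, (((i : ℕ) : ℤ) + ∑ j ∈ Finset.Icc 1 (i : ℕ), a j) * (s' i : ℤ) := by
      apply Finset.sum_congr rfl
      intro i hi
      simp only [hF, mem_filter, mem_univ, true_and] at hi
      rw [seq i (by omega)]
    have hz : (s ⟨0, hk⟩ : ℤ) = (s' ⟨0, hk⟩ : ℤ) := by linarith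
    funext i
    by_cases hi : (i : ℕ) = 0
    · have hix : i = ⟨0, hk⟩ := Fin.ext hi
      rw [hix]
      exact_mod_cast hz
    · exact seq i (by omega)
  -- image of T equals S
  have himg : g '' T = S := by
    apply Set.Subset.antisymm
    · rintro _ ⟨s, hs, rfl⟩
      exact hmapsto s hs
    · intro lam hlam
      simp only [hS, Set.mem_setOf_eq] at hlam
      obtain ⟨h1, h2, h3, h4⟩ := hlam
      set lam' : ℕ → ℤ := fun m => if h : m < k then lam ⟨m, h⟩ else 0 with hlamd
      set s : Fin k → ℕ := fun i =>
        if (i : ℕ) = 0 then (lam ⟨0, hk⟩ - ∑ j ∈ F, a (j : ℕ) * lam j).toNat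
        else (lam' (i : ℕ) - lam' ((i : ℕ) + 1)).toNat with hsdef
      have mono : ∀ m, 1 ≤ m → 0 ≤ lam' m - lam' (m + 1) := by
        intro m hm
        by_cases hmk : m < k
        · by_cases hmk1 : m + 1 < k
          · simp only [hlamd, dif_pos hmk, dif_pos hmk1]
            exact sub_nonneg.mpr (h2 ⟨m, hmk⟩ hm hmk1)
          · simp only [hlamd, dif_pos hmk, dif_neg hmk1]
            have hix : (⟨m, hmk⟩ : Fin k) = ⟨k - 1, by omega⟩ := by
              refine Fin.ext ?_
              show m = k - 1
              omega
            rw [hix]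
            simpa using h1
        · have hmk1 : ¬ (m + 1 < k) := by omega
          simp [hlamd, hmk, hmk1]
      have key : ∀ d m, k ≤ m + d → 1 ≤ m → (Hs k s m : ℤ) = lam' m := by
        intro d
        induction d with
        | zero =>
          intro m hm _
          have hx : ¬ m < k := by omega
          rw [Hs_of_le k s m (by omega)]
          simp [hlamd, hx]
        | succ d ih =>
          intro m hm h1m
          by_cases hmk : m < k
          · rw [Hs_rec k s m hmk]
            push_cast
            rw [ih (m + 1) (by omega) (by omega)]
            have hsv : s ⟨m, hmk⟩ = (lam' m - lam' (m + 1)).toNat := by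
              simp only [hsdef, if_neg (show ¬ ((⟨m, hmk⟩ : Fin k) : ℕ) = 0 from by
                show ¬ m = 0; omega)]
            rw [hsv, Int.toNat_of_nonneg (mono m h1m)]
            ring
          · have hx : ¬ m < k := hmk
            rw [Hs_of_le k s m (by omega)]
            simp [hlamd, hx]
      have Hkey : ∀ m, 1 ≤ m → (Hs k s m : ℤ) = lam' m :=
        fun m hm => key k m (by omega) hm
      have HlamF : ∀ j ∈ F, (Hs k s (j : ℕ) : ℤ) = lam j := by
        intro j hj
        simp only [hF, mem_filter, mem_univ, true_and] at hj
        rw [Hkey (j : ℕ) (by omega)]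
        simp only [hlamd, dif_pos j.isLt, Fin.eta]
      have hs0nn : 0 ≤ lam ⟨0, hk⟩ - ∑ j ∈ F, a (j : ℕ) * lam j := sub_nonneg.mpr h3
      have hs0 : (s ⟨0, hk⟩ : ℤ) = lam ⟨0, hk⟩ - ∑ j ∈ F, a (j : ℕ) * lam j := by
        simp only [hsdef, if_pos rfl]
        rw [Int.toNat_of_nonneg hs0nn]
      have hsplit := split lam
      rw [h4] at hsplit
      have hsT : s ∈ T := by
        simp only [hT, Set.mem_setOf_eq]
        have e1 : ∑ i ∈ F, (((i : ℕ) : ℤ) + ∑ j ∈ Finset.Icc 1 (i : ℕ), a j) * (s i : ℤ)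
            = ∑ j ∈ F, ((j : ℕ) : ℤ) * (s j : ℤ)
              + ∑ j ∈ F, (∑ m ∈ Finset.Icc 1 (j : ℕ), a m) * (s j : ℤ) := by
          rw [← Finset.sum_add_distrib]
          apply Finset.sum_congr rfl
          intro j _
          ring
        have e2 : ∑ j ∈ F, ((j : ℕ) : ℤ) * (s j : ℤ) = ∑ j ∈ F, lam j := by
          rw [← sw1 s]
          exact Finset.sum_congr rfl HlamF
        have e3 : ∑ j ∈ F, (∑ m ∈ Finset.Icc 1 (j : ℕ), a m) * (s j : ℤ)
            = ∑ j ∈ F, a (j : ℕ) * lam j := by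
          rw [← sw2 s]
          apply Finset.sum_congr rfl
          intro j hj
          rw [HlamF j hj]
        rw [e1, e2, e3, hs0]
        linarith
      refine ⟨s, hsT, ?_⟩
      funext i
      by_cases hi : (i : ℕ) = 0
      · have hix : i = ⟨0, hk⟩ := Fin.ext hi
        rw [hix]
        simp only [hg, if_pos rfl]
        rw [Finset.sum_congr rfl HlamF]
        linarith
      · simp only [hg, if_neg hi]
        rw [Hkey (i : ℕ) (by omega)]
        simp only [hlamd, dif_pos i.isLt, Fin.eta]
  calc S.ncard = (g '' T).ncard := by rw [himg]
    _ = T.ncard := Set.ncard_image_of_injOn hinj
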